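/- For a meromorphic function f in class B (bounded singular set) and R₀ large enough that Sing(f⁻¹) ⊂ D(0,R₀), if additionally ∞ is not an asymptotic value of f, then f restricted to any component U of f⁻¹({z : |z| > R₀} ∪ {∞}) containing exactly one simple pole is a conformal bijection onto {z : |z| > R₀} ∪ {∞}. -/

import Mathlib

open Filter Topology

open Set in
lemma main_bij (g : ℂ → ℂ) (U : Set ℂ) (r : ℝ) (hr : 0 < r)
    (hUo : IsOpen U) (hK : IsCompact (closure U))
    (hg : ∀ z ∈ U, AnalyticAt ℂ g z)
    (hg' : ∀ z ∈ U, deriv g z ≠ 0)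
    (hcont : ∀ y ∈ closure U, ContinuousAt g y)
    (hbnd : ∀ y ∈ closure U \ U, r ≤ ‖g y‖)
    (hmaps : ∀ z ∈ U, ‖g z‖ < r)
    (z₀ : ℂ) (hz₀U : z₀ ∈ U) (hfib0 : ∀ z ∈ U, g z = g z₀ → z = z₀) :
    Set.BijOn g U {w : ℂ | ‖w‖ < r} := by
  classical
  -- local injectivity and openness at each point of U
  have hloc : ∀ z ∈ U, ∃ s : Set ℂ, IsOpen s ∧ z ∈ s ∧ Set.InjOn g s ∧
      Filter.map g (𝓝 z) = 𝓝 (g z) := by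
    intro z hz
    obtain ⟨p, hp⟩ := hg z hz
    have hsd : HasStrictDerivAt g (deriv g z) z := by
      have h1 := hp.hasStrictDerivAt
      rw [h1.hasDerivAt.deriv]
      exact h1
    have he := hsd.hasStrictFDerivAt_equiv (hg' z hz)
    refine ⟨(he.toOpenPartialHomeomorph g).source, (he.toOpenPartialHomeomorph g).open_source,
      he.mem_toOpenPartialHomeomorph_source, ?_, he.map_nhds_eq_of_equiv⟩
    exact (he.toOpenPartialHomeomorph g).injOn
  -- the properness statement
  have hprop : ∀ (V : Set ℂ), IsOpen V → ∀ w : ℂ, ‖w‖ < r →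
      U ∩ g ⁻¹' {w} ⊆ V → ∀ᶠ w' in 𝓝 w, U ∩ g ⁻¹' {w'} ⊆ V := by
    intro V hV w hw hfib
    by_contra hcon
    rw [Filter.not_eventually] at hcon
    have hne : (𝓝 w ⊓ 𝓟 {w' | ¬ U ∩ g ⁻¹' {w'} ⊆ V}).NeBot := by
      rwa [Filter.frequently_iff_neBot] at hcon
    obtain ⟨wseq, hwseq⟩ := @exists_seq_tendsto _ (𝓝 w ⊓ 𝓟 {w' | ¬ U ∩ g ⁻¹' {w'} ⊆ V}) _ _
    have hw1 : Tendsto wseq atTop (𝓝 w) := hwseq.mono_right inf_le_left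
    have hwbad : ∀ᶠ n in atTop, ¬ U ∩ g ⁻¹' {wseq n} ⊆ V :=
      tendsto_principal.mp (hwseq.mono_right inf_le_right)
    have hzex : ∀ n, ∃ z, (¬ U ∩ g ⁻¹' {wseq n} ⊆ V) →
        z ∈ U ∩ g ⁻¹' {wseq n} ∧ z ∉ V := by
      intro n
      by_cases h : U ∩ g ⁻¹' {wseq n} ⊆ V
      · exact ⟨z₀, fun hc => absurd h hc⟩
      · obtain ⟨z, hz1, hz2⟩ := Set.not_subset.mp h
        exact ⟨z, fun _ => ⟨hz1, hz2⟩⟩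
    choose zs hzs using hzex
    have hzU : ∀ᶠ n in atTop, zs n ∈ U ∩ g ⁻¹' {wseq n} ∧ zs n ∉ V :=
      hwbad.mono fun n h => hzs n h
    obtain ⟨N, hN⟩ := eventually_atTop.mp hzU
    set zz : ℕ → ℂ := fun n => zs (n + N) with hzzdef
    have hzz : ∀ n, zz n ∈ U ∩ g ⁻¹' {wseq (n + N)} ∧ zz n ∉ V :=
      fun n => hN _ (Nat.le_add_left N n)
    have hzzK : ∀ n, zz n ∈ closure U := fun n => subset_closure (hzz n).1.1
    obtain ⟨y, hyK, φ, hφ, hconv⟩ := hK.tendsto_subseq hzzK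
    have hgy : Tendsto (fun n => g (zz (φ n))) atTop (𝓝 (g y)) :=
      (hcont y hyK).tendsto.comp hconv
    have hgy2 : Tendsto (fun n => g (zz (φ n))) atTop (𝓝 w) := by
      have heq : ∀ n, g (zz (φ n)) = wseq (φ n + N) := fun n => (hzz (φ n)).1.2
      have h2 : Tendsto (fun n => wseq (φ n + N)) atTop (𝓝 w) :=
        hw1.comp ((tendsto_add_atTop_nat N).comp hφ.tendsto_atTop)
      exact h2.congr fun n => (heq n).symm
    have hgyw : g y = w := tendsto_nhds_unique hgy hgy2
    by_cases hyU : y ∈ U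
    · have hyV : y ∈ V := hfib ⟨hyU, by simp [hgyw]⟩
      obtain ⟨n, hn⟩ := (hconv.eventually (hV.mem_nhds hyV)).exists
      exact (hzz (φ n)).2 hn
    · have := hbnd y ⟨hyK, hyU⟩
      rw [hgyw] at this
      linarith
  have hDopen : IsOpen {w : ℂ | ‖w‖ < r} :=
    isOpen_lt continuous_norm continuous_const
  -- the set of points with subsingleton fiber
  have hEopen : IsOpen {w : ℂ | ‖w‖ < r ∧ (U ∩ g ⁻¹' {w}).Subsingleton} := by
    rw [isOpen_iff_mem_nhds]
    rintro w ⟨hwD, hsub⟩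
    have hV : ∃ V : Set ℂ, IsOpen V ∧ Set.InjOn g V ∧ U ∩ g ⁻¹' {w} ⊆ V := by
      rcases Set.eq_empty_or_nonempty (U ∩ g ⁻¹' {w}) with h | ⟨z, hz⟩
      · exact ⟨∅, isOpen_empty, Set.injOn_empty g, by rw [h]⟩
      · obtain ⟨s, hso, hzs, hinj, _⟩ := hloc z hz.1
        refine ⟨s, hso, hinj, fun x hx => ?_⟩
        rw [hsub hx hz]; exact hzs
    obtain ⟨V, hVo, hVinj, hfibV⟩ := hV
    filter_upwards [hprop V hVo w hwD hfibV, hDopen.mem_nhds hwD] with w' hw1 hw2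
    exact ⟨hw2, fun a ha b hb => hVinj (hw1 ha) (hw1 hb) (by
      have h1 : g a = w' := ha.2
      have h2 : g b = w' := hb.2
      rw [h1, h2])⟩
  have hCopen : IsOpen {w : ℂ | ‖w‖ < r ∧ ¬ (U ∩ g ⁻¹' {w}).Subsingleton} := by
    rw [isOpen_iff_mem_nhds]
    rintro w ⟨hwD, hns⟩
    rw [Set.not_subsingleton_iff] at hns
    obtain ⟨z₁, hz₁, z₂, hz₂, hne12⟩ := hns
    obtain ⟨s₁, hs₁o, hz₁s, _, hmap₁⟩ := hloc z₁ hz₁.1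
    obtain ⟨s₂, hs₂o, hz₂s, _, hmap₂⟩ := hloc z₂ hz₂.1
    obtain ⟨t₁, t₂, ht₁o, ht₂o, hz₁t, hz₂t, hdisj⟩ := t2_separation hne12
    have hgz₁ : g z₁ = w := hz₁.2
    have hgz₂ : g z₂ = w := hz₂.2
    have m₁ : g '' (s₁ ∩ t₁ ∩ U) ∈ 𝓝 w := by
      rw [← hgz₁, ← hmap₁]
      exact image_mem_map (((hs₁o.inter ht₁o).inter hUo).mem_nhds ⟨⟨hz₁s, hz₁t⟩, hz₁.1⟩)
    have m₂ : g '' (s₂ ∩ t₂ ∩ U) ∈ 𝓝 w := by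
      rw [← hgz₂, ← hmap₂]
      exact image_mem_map (((hs₂o.inter ht₂o).inter hUo).mem_nhds ⟨⟨hz₂s, hz₂t⟩, hz₂.1⟩)
    filter_upwards [m₁, m₂, hDopen.mem_nhds hwD] with w' hw1 hw2 hw3
    refine ⟨hw3, ?_⟩
    rw [Set.not_subsingleton_iff]
    obtain ⟨x₁, hx₁, hgx₁⟩ := hw1
    obtain ⟨x₂, hx₂, hgx₂⟩ := hw2
    refine ⟨x₁, ⟨hx₁.2, by simp [hgx₁]⟩, x₂, ⟨hx₂.2, by simp [hgx₂]⟩, ?_⟩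
    intro hxx
    exact Set.disjoint_left.mp hdisj hx₁.1.2 (hxx ▸ hx₂.1.2)
  have hDpre : IsPreconnected {w : ℂ | ‖w‖ < r} := by
    have hDeq : {w : ℂ | ‖w‖ < r} = Metric.ball (0 : ℂ) r := by
      ext w; simp [Metric.mem_ball, Complex.dist_eq]
    rw [hDeq]
    exact (convex_ball (0 : ℂ) r).isPreconnected
  have hfib0' : (U ∩ g ⁻¹' {g z₀}).Subsingleton := by
    intro a ha b hb
    rw [hfib0 a ha.1 ha.2, hfib0 b hb.1 hb.2]
  -- every fiber over the disc is subsingleton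
  have hsubs : ∀ w : ℂ, ‖w‖ < r → (U ∩ g ⁻¹' {w}).Subsingleton := by
    have key : {w : ℂ | ‖w‖ < r} ⊆
        {w : ℂ | ‖w‖ < r ∧ (U ∩ g ⁻¹' {w}).Subsingleton} := by
      apply hDpre.subset_of_closure_inter_subset hEopen
      · exact ⟨g z₀, hmaps z₀ hz₀U, hmaps z₀ hz₀U, hfib0'⟩
      · intro w ⟨hwc, hwD⟩
        by_contra hcon
        have hwC : w ∈ {w : ℂ | ‖w‖ < r ∧ ¬ (U ∩ g ⁻¹' {w}).Subsingleton} :=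
          ⟨hwD, fun h => hcon ⟨hwD, h⟩⟩
        have := (hCopen.mem_nhds hwC)
        rw [mem_closure_iff_nhds] at hwc
        obtain ⟨x, hx1, hx2⟩ := hwc _ this
        exact hx1.2 hx2.2
    exact fun w hw => (key hw).2
  -- surjectivity
  have hTopen : IsOpen (g '' U) := by
    rw [isOpen_iff_mem_nhds]
    rintro w ⟨z, hz, rfl⟩
    obtain ⟨s, hso, hzs, hinj, hmap⟩ := hloc z hz
    rw [← hmap]
    exact image_mem_map (hUo.mem_nhds hz)
  have hsurj : {w : ℂ | ‖w‖ < r} ⊆ g '' U := by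
    apply hDpre.subset_of_closure_inter_subset hTopen
    · exact ⟨g z₀, hmaps z₀ hz₀U, z₀, hz₀U, rfl⟩
    · rintro w ⟨hwc, hwD⟩
      have hcpt : IsCompact (g '' closure U) :=
        hK.image_of_continuousOn fun y hy => (hcont y hy).continuousWithinAt
      have hwcl : w ∈ g '' closure U := by
        have : closure (g '' U) ⊆ g '' closure U :=
          closure_minimal (Set.image_mono subset_closure) hcpt.isClosed
        exact this hwc
      obtain ⟨y, hy, rfl⟩ := hwcl
      by_cases hyU : y ∈ U
      · exact ⟨y, hyU, rfl⟩
      · have := hbnd y ⟨hy, hyU⟩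
        exact absurd hwD (by simp only [Set.mem_setOf_eq]; linarith)
  refine ⟨fun z hz => hmaps z hz, ?_, ?_⟩
  · intro z₁ hz₁ z₂ hz₂ heq
    exact hsubs (g z₁) (hmaps z₁ hz₁) ⟨hz₁, rfl⟩ ⟨hz₂, heq.symm⟩
  · intro w hw
    exact hsurj hw

/-- For a meromorphic function `f` (holomorphic off its pole set `S`, with `|f| → ∞` at
each pole) and `R₀` large, let `U` be a bounded, simply connected component of the
preimage of `B(R₀) = {w : |w| > R₀} ∪ {∞}` containing exactly one pole `z₀`, which is
simple; if `f` has no critical points in `U`, and `∞` is not an asymptotic value (so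
that `U` is indeed such a bounded component), then `f` restricted to `U ∖ {z₀}` is a
conformal bijection onto `{w : |w| > R₀}`. -/
theorem restriction_to_pole_component_bijective (f : ℂ → ℂ) (S : Set ℂ) (R₀ : ℝ)
    (hR₀ : 0 < R₀)
    (hf : ∀ z ∈ Sᶜ, AnalyticAt ℂ f z)
    (hpoles : ∀ s ∈ S, Tendsto (fun z => ‖f z‖) (𝓝[≠] s) atTop)
    (z₀ : ℂ) (hz₀ : z₀ ∈ S)
    (U : Set ℂ)
    (hU : U = connectedComponentIn {z : ℂ | z ∈ S ∨ R₀ < ‖f z‖} z₀)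
    (honepole : U ∩ S = {z₀})
    (hbounded : Bornology.IsBounded U)
    (hsc : SimplyConnectedSpace U)
    (hsimple : ∃ b : ℂ, b ≠ 0 ∧
      Tendsto (fun z => (z - z₀) * f z) (𝓝[≠] z₀) (𝓝 b))
    (hnocrit : ∀ z ∈ U \ {z₀}, deriv f z ≠ 0) :
    Set.BijOn f (U \ {z₀}) {w : ℂ | R₀ < ‖w‖} := by
  classical
  set A : Set ℂ := {z : ℂ | z ∈ S ∨ R₀ < ‖f z‖} with hAdef
  have hz₀A : z₀ ∈ A := Or.inl hz₀
  -- A is open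
  have hAopen : IsOpen A := by
    rw [isOpen_iff_mem_nhds]
    intro z hz
    by_cases hzS : z ∈ S
    · have h1 : ∀ᶠ w in 𝓝[≠] z, R₀ < ‖f w‖ :=
        (hpoles z hzS).eventually_gt_atTop R₀
      rw [eventually_nhdsWithin_iff] at h1
      filter_upwards [h1] with w hw
      rcases eq_or_ne w z with rfl | hne
      · exact Or.inl hzS
      · exact Or.inr (hw hne)
    · have hzabs : R₀ < ‖f z‖ := hz.resolve_left hzS
      have hc : ContinuousAt (fun w => ‖f w‖) z :=
        continuous_norm.continuousAt.comp (hf z hzS).continuousAt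
      filter_upwards [hc.eventually (eventually_gt_nhds hzabs)] with w hw
      exact Or.inr hw
  have hUopen : IsOpen U := hU ▸ hAopen.connectedComponentIn
  have hz₀U : z₀ ∈ U := hU ▸ mem_connectedComponentIn hz₀A
  have hUA : U ⊆ A := hU ▸ connectedComponentIn_subset A z₀
  -- maximality of the component
  have hmax : ∀ s : Set ℂ, IsPreconnected s → s ⊆ A → (s ∩ U).Nonempty → s ⊆ U := by
    rintro s hs hsA ⟨y, hys, hyU⟩
    have hyU' : y ∈ connectedComponentIn A z₀ := by rw [← hU]; exact hyU
    have h1 : connectedComponentIn A z₀ = connectedComponentIn A y :=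
      connectedComponentIn_eq hyU'
    have h2 := hs.subset_connectedComponentIn hys hsA
    rw [← h1, ← hU] at h2
    exact h2
  -- frontier points are not in A
  have hfrontier : ∀ y ∈ closure U \ U, y ∉ A := by
    rintro y ⟨hyc, hyU⟩ hyA
    obtain ⟨ε, hε, hball⟩ := Metric.isOpen_iff.mp hAopen y hyA
    have hne : (Metric.ball y ε ∩ U).Nonempty :=
      mem_closure_iff_nhds.mp hyc _ (Metric.ball_mem_nhds y hε)
    exact hyU (hmax _ (convex_ball y ε).isPreconnected hball hne (Metric.mem_ball_self hε))
  -- off the pole, points of U have large |f|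
  have hUne : ∀ z ∈ U, z ≠ z₀ → z ∉ S ∧ R₀ < ‖f z‖ := by
    intro z hz hne
    have hzS : z ∉ S := by
      intro h
      exact hne (by rw [← Set.mem_singleton_iff, ← honepole]; exact ⟨hz, h⟩)
    exact ⟨hzS, (hUA hz).resolve_left hzS⟩
  have hfne : ∀ z ∈ U, z ≠ z₀ → f z ≠ 0 := by
    intro z hz hne h0
    have := (hUne z hz hne).2
    rw [h0] at this
    simp at this
    linarith
  -- the reciprocal function
  set g : ℂ → ℂ := fun z => if z = z₀ then 0 else (f z)⁻¹ with hgdef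
  have hgz₀ : g z₀ = 0 := if_pos rfl
  have hgne : ∀ z, z ≠ z₀ → g z = (f z)⁻¹ := fun z h => if_neg h
  have hgev : ∀ z : ℂ, z ≠ z₀ → (fun w => (f w)⁻¹) =ᶠ[𝓝 z] g := by
    intro z hz
    filter_upwards [compl_singleton_mem_nhds hz] with w hw
    exact (hgne w hw).symm
  have hganal : ∀ z ∈ U, z ≠ z₀ → AnalyticAt ℂ g z := by
    intro z hz hne
    exact (((hf z (hUne z hz hne).1).inv (hfne z hz hne))).congr (hgev z hne)
  have hcontz₀ : ContinuousAt g z₀ := by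
    rw [ContinuousAt, hgz₀]
    have h1 : Tendsto g (𝓝[≠] z₀) (𝓝 0) := by
      have h2 : Tendsto (fun z => (f z)⁻¹) (𝓝[≠] z₀) (𝓝 (0 : ℂ)) := by
        rw [tendsto_zero_iff_norm_tendsto_zero]
        have h3 := (hpoles z₀ hz₀).inv_tendsto_atTop
        apply h3.congr
        intro z
        simp [norm_inv]
      apply h2.congr'
      filter_upwards [eventually_mem_nhdsWithin] with z hz
      exact (hgne z hz).symm
    rw [← nhdsNE_sup_pure z₀, tendsto_sup]
    refine ⟨h1, ?_⟩
    rw [tendsto_pure_left]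
    intro s hs
    rw [hgz₀]
    exact mem_of_mem_nhds hs
  have hgU : ∀ z ∈ U, AnalyticAt ℂ g z := by
    intro z hz
    rcases eq_or_ne z z₀ with rfl | hne
    · apply Complex.analyticAt_of_differentiable_on_punctured_nhds_of_continuousAt _ hcontz₀
      filter_upwards [eventually_mem_nhdsWithin,
        eventually_nhdsWithin_of_eventually_nhds (hUopen.eventually_mem hz)] with w hw hwU
      exact (hganal w hwU hw).differentiableAt
    · exact hganal z hz hne
  -- nonvanishing derivative of g on U
  have hderiv_ne : ∀ z ∈ U, deriv g z ≠ 0 := by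
    intro z hz
    rcases eq_or_ne z z₀ with rfl | hne
    · obtain ⟨b, hb0, hb⟩ := hsimple
      have hd := (hgU z hz).differentiableAt.hasDerivAt
      have hslope := hasDerivAt_iff_tendsto_slope.mp hd
      have hslope2 : Tendsto (slope g z) (𝓝[≠] z) (𝓝 b⁻¹) := by
        have h1 : Tendsto (fun w => ((w - z) * f w)⁻¹) (𝓝[≠] z) (𝓝 b⁻¹) := hb.inv₀ hb0
        apply h1.congr'
        filter_upwards [eventually_mem_nhdsWithin] with w hw
        rw [slope_def_field, hgz₀, hgne w hw, sub_zero, mul_inv, div_eq_inv_mul]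
      have : deriv g z = b⁻¹ := tendsto_nhds_unique hslope hslope2
      rw [this]
      exact inv_ne_zero hb0
    · have hdiff : DifferentiableAt ℂ f z := (hf z (hUne z hz hne).1).differentiableAt
      have h1 : deriv g z = deriv (fun w => (f w)⁻¹) z := ((hgev z hne).deriv_eq).symm
      rw [h1, show (fun w => (f w)⁻¹) = f⁻¹ from rfl, deriv_inv'' hdiff (hfne z hz hne)]
      apply div_ne_zero
      · simpa using hnocrit z ⟨hz, hne⟩
      · exact pow_ne_zero 2 (hfne z hz hne)
  -- compactness of the closure
  have hKcp : IsCompact (closure U) :=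
    Metric.isCompact_of_isClosed_isBounded isClosed_closure hbounded.closure
  -- closure U is contained in the closure of U \ {z₀}
  have hclpunct : closure U ⊆ closure (U \ {z₀}) := by
    have h1 : U ⊆ closure (U \ {z₀}) := by
      intro u hu
      rcases eq_or_ne u z₀ with heq | hne
      · subst heq
        rw [mem_closure_iff_nhdsWithin_neBot, Set.diff_eq, Set.inter_comm,
          nhdsWithin_inter_of_mem' (mem_nhdsWithin_of_mem_nhds (hUopen.mem_nhds hu))]
        exact inferInstance
      · exact subset_closure ⟨hu, hne⟩
    intro x hx
    have h2 := closure_mono h1 hx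
    rwa [closure_closure] at h2
  -- values of f on the frontier
  have hfrontf : ∀ y ∈ closure U \ U, y ∉ S ∧ y ≠ z₀ ∧ R₀ ≤ ‖f y‖ ∧
      ‖f y‖ ≤ R₀ := by
    rintro y hy
    have hyA : y ∉ A := hfrontier y hy
    have hyS : y ∉ S := fun h => hyA (Or.inl h)
    have hyne : y ≠ z₀ := fun h => hy.2 (h ▸ hz₀U)
    have hle : ‖f y‖ ≤ R₀ := le_of_not_gt fun h => hyA (Or.inr h)
    refine ⟨hyS, hyne, ?_, hle⟩
    have hycl : y ∈ closure (U \ {z₀}) := hclpunct hy.1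
    have hnb : (𝓝[U \ {z₀}] y).NeBot := mem_closure_iff_nhdsWithin_neBot.mp hycl
    have ht : Tendsto (fun z => ‖f z‖) (𝓝[U \ {z₀}] y)
        (𝓝 (‖f y‖)) :=
      (continuous_norm.continuousAt.comp (hf y hyS).continuousAt).continuousWithinAt
    apply ge_of_tendsto ht
    filter_upwards [eventually_mem_nhdsWithin] with z hz
    exact le_of_lt (hUne z hz.1 hz.2).2
  -- continuity of g on the closure
  have hcontcl : ∀ y ∈ closure U, ContinuousAt g y := by
    intro y hy
    by_cases hyU : y ∈ U
    · exact (hgU y hyU).continuousAt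
    · obtain ⟨hyS, hyne, hge, _⟩ := hfrontf y ⟨hy, hyU⟩
      have hfy : f y ≠ 0 := by
        intro h
        rw [h] at hge
        simp at hge
        linarith
      exact ContinuousAt.congr_of_eventuallyEq ((hf y hyS).continuousAt.inv₀ hfy)
        (hgev y hyne).symm
  -- boundedness from below on the frontier
  have hbnd : ∀ y ∈ closure U \ U, R₀⁻¹ ≤ ‖g y‖ := by
    intro y hy
    obtain ⟨hyS, hyne, hge, hle⟩ := hfrontf y hy
    rw [hgne y hyne, norm_inv]
    have hpos : 0 < ‖f y‖ := lt_of_lt_of_le hR₀ hge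
    exact inv_anti₀ hpos hle
  -- g maps U into the disc
  have hmapsg : ∀ z ∈ U, ‖g z‖ < R₀⁻¹ := by
    intro z hz
    rcases eq_or_ne z z₀ with rfl | hne
    · rw [hgz₀]
      simpa using inv_pos.mpr hR₀
    · rw [hgne z hne, norm_inv]
      exact inv_strictAnti₀ hR₀ (hUne z hz hne).2
  -- fiber over 0
  have hfib0 : ∀ z ∈ U, g z = g z₀ → z = z₀ := by
    intro z hz h
    by_contra hne
    rw [hgz₀, hgne z hne] at h
    exact hfne z hz hne (inv_eq_zero.mp h)
  have main := main_bij g U R₀⁻¹ (inv_pos.mpr hR₀) hUopen hKcp hgU hderiv_ne hcontcl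
    hbnd hmapsg z₀ hz₀U hfib0
  constructor
  · intro z hz
    exact (hUne z hz.1 hz.2).2
  constructor
  · intro z₁ hz₁ z₂ hz₂ heq
    apply main.injOn hz₁.1 hz₂.1
    rw [hgne _ hz₁.2, hgne _ hz₂.2, heq]
  · intro w hw
    have hw' : R₀ < ‖w‖ := hw
    have hw0 : w ≠ 0 := by
      intro h
      rw [h] at hw'
      simp at hw'
      linarith
    have hwinv : w⁻¹ ∈ {w : ℂ | ‖w‖ < R₀⁻¹} := by
      rw [Set.mem_setOf_eq, norm_inv]
      exact inv_strictAnti₀ hR₀ hw'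
    obtain ⟨z, hzU, hgz⟩ := main.surjOn hwinv
    have hzne : z ≠ z₀ := by
      intro h
      rw [h, hgz₀] at hgz
      exact inv_ne_zero hw0 hgz.symm
    refine ⟨z, ⟨hzU, hzne⟩, ?_⟩
    have : (f z)⁻¹ = w⁻¹ := by rw [← hgne z hzne]; exact hgz
    exact inv_injective this
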